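/- Let k be a nonzero real number and let X be a complex number with |X| = 1. If Δ_k(X) > 0, then B_k(X) has the same sign as k (i.e., k·B_k(X) > 0). -/

import Mathlib

/-- B_k(X) = (X + 1/X)² + k(X + 1/X) + 2k − 2. -/
noncomputable def Bfun (k : ℝ) (X : ℂ) : ℂ :=
  (X + 1 / X) ^ 2 + (k : ℂ) * (X + 1 / X) + 2 * (k : ℂ) - 2

/-- Δ_k(X) = B_k(X)² − 4. -/
noncomputable def Δfun (k : ℝ) (X : ℂ) : ℂ := Bfun k X ^ 2 - 4

/-- For nonzero real `k` and `|X| = 1`: if `Δ_k(X) > 0` (it is real on the unit circle),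
then `B_k(X)` (also real there) has the same sign as `k`, i.e. `k·B_k(X) > 0`. -/
theorem sign_B_eq_sign_k (k : ℝ) (hk : k ≠ 0) (X : ℂ) (hX : ‖X‖ = 1)
    (hΔre : 0 < (Δfun k X).re) (hΔim : (Δfun k X).im = 0) :
    0 < k * (Bfun k X).re ∧ (Bfun k X).im = 0 := by
  have hXne : X ≠ 0 := by
    intro h; rw [h] at hX; simp at hX
  have hmul : X * (starRingEnd ℂ) X = 1 := by
    rw [Complex.mul_conj]
    norm_cast
    rw [Complex.normSq_eq_norm_sq, hX]; norm_num
  have hinv : 1 / X = (starRingEnd ℂ) X := by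
    field_simp
    linear_combination -hmul
  set t : ℝ := 2 * X.re with htdef
  have ht : X + 1 / X = (t : ℝ) := by
    rw [hinv, Complex.add_conj]
  have hB : Bfun k X = ((t ^ 2 + k * t + 2 * k - 2 : ℝ) : ℂ) := by
    rw [Bfun, ht]; push_cast; ring
  set B : ℝ := t ^ 2 + k * t + 2 * k - 2 with hBdef
  have hBre : (Bfun k X).re = B := by rw [hB]; simp
  have hBim : (Bfun k X).im = 0 := by rw [hB]; simp
  have hΔc : Δfun k X = ((B ^ 2 - 4 : ℝ) : ℂ) := by
    rw [Δfun, hB]; push_cast; ring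
  have hΔ : (Δfun k X).re = B ^ 2 - 4 := by rw [hΔc, Complex.ofReal_re]
  rw [hΔ] at hΔre
  have ht2 : t ≤ 2 := by
    have := Complex.abs_re_le_norm X
    rw [hX] at this
    have := abs_le.mp this
    simp only [htdef]; linarith [this.2]
  have ht1 : -2 ≤ t := by
    have := Complex.abs_re_le_norm X
    rw [hX] at this
    have := abs_le.mp this
    simp only [htdef]; linarith [this.1]
  refine ⟨?_, hBim⟩
  rw [hBre]
  rcases lt_or_gt_of_ne (show B ≠ 0 by intro h; rw [h] at hΔre; norm_num at hΔre) with hBneg | hBpos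
  · -- B < 0, so B < -2, so k(t+2) < 0, t+2 ≥ 0 ⇒ k < 0
    have hBlt : B < -2 := by nlinarith
    have hk2 : k * (t + 2) < 0 := by nlinarith
    have hkneg : k < 0 := by nlinarith
    nlinarith
  · have hBgt : 2 < B := by nlinarith
    have hk2 : 0 < k * (t + 2) := by nlinarith
    have hkpos : 0 < k := by nlinarith
    nlinarith
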